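/- (Inexact sufficient decrease.) Let g : ℝⁿ → ℝ ∪ {+∞} be proper, convex and lower semicontinuous, let S : ℝⁿ → ℝ be differentiable and L-smooth on dom g, and let η > 0. For any y ∈ dom g and any G ∈ ℝⁿ, setting y⁺ = prox_{ηg}(y − η G), one has S(y) + g(y) − S(y⁺) − g(y⁺) ≥ ⟨G − ∇S(y), y⁺ − y⟩ + ((1 − ηL)/(2η))·‖y⁺ − y‖². -/

import Mathlib

noncomputable section

open Finset MeasureTheory
open scoped RealInnerProductSpace

/-- `g : ℝⁿ → ℝ ∪ {+∞}` is proper, convex and lower semicontinuous. -/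
def ProperConvexLsc {n : ℕ} (g : EuclideanSpace ℝ (Fin n) → WithTop ℝ) : Prop :=
  (∃ x, g x ≠ ⊤) ∧ LowerSemicontinuous g ∧
    ∀ x y : EuclideanSpace ℝ (Fin n), ∀ a b : ℝ, 0 ≤ a → 0 ≤ b → a + b = 1 →
      g (a • x + b • y) ≤ (a : WithTop ℝ) * g x + (b : WithTop ℝ) * g y

/-- `p` is a minimizer of `z ↦ η·g(z) + ½‖u − z‖²`. -/
def IsProxPt {n : ℕ} (g : EuclideanSpace ℝ (Fin n) → WithTop ℝ) (η : ℝ)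
    (u p : EuclideanSpace ℝ (Fin n)) : Prop :=
  ∀ z : EuclideanSpace ℝ (Fin n),
    (η : WithTop ℝ) * g p + ((1 / 2 * ‖u - p‖ ^ 2 : ℝ) : WithTop ℝ) ≤
      (η : WithTop ℝ) * g z + ((1 / 2 * ‖u - z‖ ^ 2 : ℝ) : WithTop ℝ)

/-- `prox` is the proximal operator of `ηg`: `prox u` is the unique minimizer of
`z ↦ η·g(z) + ½‖u − z‖²`. -/
def IsProxFun {n : ℕ} (g : EuclideanSpace ℝ (Fin n) → WithTop ℝ) (η : ℝ)
    (prox : EuclideanSpace ℝ (Fin n) → EuclideanSpace ℝ (Fin n)) : Prop :=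
  ∀ u, IsProxPt g η u (prox u) ∧ ∀ q, IsProxPt g η u q → q = prox u

/-- The prox-grad residual `P_η^g(x; d) = (x − prox_{ηg}(x − η d))/η`. -/
def proxRes {n : ℕ} (prox : EuclideanSpace ℝ (Fin n) → EuclideanSpace ℝ (Fin n)) (η : ℝ)
    (x d : EuclideanSpace ℝ (Fin n)) : EuclideanSpace ℝ (Fin n) :=
  η⁻¹ • (x - prox (x - η • d))

/-- inexact sufficient decrease: for `y ∈ dom g`, `G ∈ ℝⁿ` and
`y⁺ = prox_{ηg}(y − ηG)`, one has
`S(y) + g(y) − S(y⁺) − g(y⁺) ≥ ⟨G − ∇S(y), y⁺ − y⟩ + ((1 − ηL)/(2η))‖y⁺ − y‖²`. -/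
theorem stmt5 {n : ℕ} (g : EuclideanSpace ℝ (Fin n) → WithTop ℝ)
    (hg : ProperConvexLsc g)
    (prox : EuclideanSpace ℝ (Fin n) → EuclideanSpace ℝ (Fin n))
    (L η : ℝ) (hη : 0 < η)
    (hprox : IsProxFun g η prox)
    (S : EuclideanSpace ℝ (Fin n) → ℝ) (S' : EuclideanSpace ℝ (Fin n) → EuclideanSpace ℝ (Fin n))
    (hgrad : ∀ x, HasGradientAt S (S' x) x)
    (hsmooth : ∀ x y : EuclideanSpace ℝ (Fin n), g x ≠ ⊤ → g y ≠ ⊤ →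
      ‖S' x - S' y‖ ≤ L * ‖x - y‖)
    (y G yp : EuclideanSpace ℝ (Fin n)) (hy : g y ≠ ⊤) (hyp : yp = prox (y - η • G)) :
    ((S yp : ℝ) : WithTop ℝ) + g yp +
        ((⟪G - S' y, yp - y⟫ + (1 - η * L) / (2 * η) * ‖yp - y‖ ^ 2 : ℝ) : WithTop ℝ) ≤
      ((S y : ℝ) : WithTop ℝ) + g y := by
  set v := yp - y with hv
  -- prox optimality at z = y
  have hproxy := (hprox (y - η • G)).1
  rw [← hyp] at hproxy
  have hkey := hproxy y
  obtain ⟨gy, hgy⟩ := WithTop.ne_top_iff_exists.mp hy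
  have hηW : ((η : ℝ) : WithTop ℝ) ≠ 0 := by exact_mod_cast hη.ne'
  have hyp_ne : g yp ≠ ⊤ := by
    intro h
    rw [h, ← hgy] at hkey
    rw [WithTop.mul_top hηW, top_add] at hkey
    rw [← WithTop.coe_mul, ← WithTop.coe_add] at hkey
    exact (WithTop.not_top_le_coe _) hkey
  obtain ⟨gyp, hgyp⟩ := WithTop.ne_top_iff_exists.mp hyp_ne
  rw [← hgy, ← hgyp] at hkey
  rw [← WithTop.coe_mul, ← WithTop.coe_mul, ← WithTop.coe_add, ← WithTop.coe_add,
    WithTop.coe_le_coe] at hkey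
  -- norm identities
  have hN1 : ‖y - η • G - yp‖ ^ 2 = ‖v‖ ^ 2 + 2 * (η * ⟪G, v⟫) + η ^ 2 * ‖G‖ ^ 2 := by
    have h1 : y - η • G - yp = -(v + η • G) := by rw [hv]; module
    rw [h1, norm_neg, norm_add_sq_real, real_inner_smul_right, norm_smul, Real.norm_eq_abs,
      abs_of_pos hη, real_inner_comm]
    ring
  have hN2 : ‖y - η • G - y‖ ^ 2 = η ^ 2 * ‖G‖ ^ 2 := by
    have h1 : y - η • G - y = -(η • G) := by module
    rw [h1, norm_neg, norm_smul, Real.norm_eq_abs, abs_of_pos hη]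
    ring
  rw [hN1, hN2] at hkey
  -- segment points are in dom g
  have hseg : ∀ t : ℝ, 0 ≤ t → t ≤ 1 → g (y + t • v) ≠ ⊤ := by
    intro t ht ht1
    have hc := hg.2.2 y yp (1 - t) t (by linarith) ht (by ring)
    have heq : (1 - t) • y + t • yp = y + t • v := by rw [hv]; module
    rw [heq, ← hgy, ← hgyp, ← WithTop.coe_mul, ← WithTop.coe_mul, ← WithTop.coe_add] at hc
    intro h
    rw [h] at hc
    exact absurd hc (not_le.mpr (WithTop.coe_lt_top _))
  -- the line and its derivative
  have hline : ∀ t : ℝ, HasDerivAt (fun s : ℝ => y + s • v) v t := by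
    intro t
    simpa using ((hasDerivAt_id t).smul_const v).const_add y
  have hψ : ∀ t : ℝ, HasDerivAt
      (fun s : ℝ => S (y + s • v) - s * ⟪S' y, v⟫ - L * s ^ 2 / 2 * ‖v‖ ^ 2)
      (⟪S' (y + t • v), v⟫ - ⟪S' y, v⟫ - L * t * ‖v‖ ^ 2) t := by
    intro t
    have h1 : HasDerivAt (fun s : ℝ => S (y + s • v)) ⟪S' (y + t • v), v⟫ t := by
      have := (hgrad (y + t • v)).hasFDerivAt.comp_hasDerivAt t (hline t)
      simp at this
      exact this
    have h2 : HasDerivAt (fun s : ℝ => s * ⟪S' y, v⟫) ⟪S' y, v⟫ t := by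
      simpa using (hasDerivAt_id t).mul_const ⟪S' y, v⟫
    have h3 : HasDerivAt (fun s : ℝ => L * s ^ 2 / 2 * ‖v‖ ^ 2) (L * t * ‖v‖ ^ 2) t := by
      have := (((hasDerivAt_pow 2 t).const_mul L).div_const 2).mul_const (‖v‖ ^ 2)
      refine this.congr_deriv ?_
      ring
    exact (h1.sub h2).sub h3
  -- descent lemma
  have hB : S yp ≤ S y + ⟪S' y, v⟫ + L / 2 * ‖v‖ ^ 2 := by
    set ψ : ℝ → ℝ := fun s => S (y + s • v) - s * ⟪S' y, v⟫ - L * s ^ 2 / 2 * ‖v‖ ^ 2 with hψdef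
    have hdiff : Differentiable ℝ ψ := fun t => (hψ t).differentiableAt
    have hanti : AntitoneOn ψ (Set.Icc 0 1) := by
      apply antitoneOn_of_deriv_nonpos (convex_Icc 0 1) hdiff.continuous.continuousOn
        hdiff.differentiableOn
      intro t htmem
      rw [interior_Icc] at htmem
      rw [(hψ t).deriv]
      have hdom := hseg t htmem.1.le htmem.2.le
      have hlip := hsmooth (y + t • v) y hdom hy
      have hnorm : ‖y + t • v - y‖ = t * ‖v‖ := by
        rw [add_sub_cancel_left, norm_smul, Real.norm_eq_abs, abs_of_nonneg htmem.1.le]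
      rw [hnorm] at hlip
      have hcs : ⟪S' (y + t • v) - S' y, v⟫ ≤ ‖S' (y + t • v) - S' y‖ * ‖v‖ :=
        real_inner_le_norm _ _
      rw [inner_sub_left] at hcs
      nlinarith [norm_nonneg v, mul_le_mul_of_nonneg_right hlip (norm_nonneg v)]
    have h01 := hanti (Set.left_mem_Icc.mpr zero_le_one) (Set.right_mem_Icc.mpr zero_le_one)
      zero_le_one
    have hψ0 : ψ 0 = S y := by simp [hψdef]
    have hψ1 : ψ 1 = S yp - ⟪S' y, v⟫ - L / 2 * ‖v‖ ^ 2 := by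
      have h1v : y + v = yp := by rw [hv]; module
      simp only [hψdef, one_smul, one_pow, one_mul, h1v]
      ring
    rw [hψ0, hψ1] at h01
    linarith
  -- assemble into a real inequality
  have hfinal : S yp + gyp + (⟪G - S' y, v⟫ + (1 - η * L) / (2 * η) * ‖v‖ ^ 2) ≤ S y + gy := by
    rw [inner_sub_left]
    have hc : 2 * η * ((1 - η * L) / (2 * η)) = 1 - η * L := by field_simp
    have hmul : η * (S yp + gyp + (⟪G, v⟫ - ⟪S' y, v⟫ + (1 - η * L) / (2 * η) * ‖v‖ ^ 2)) ≤
        η * (S y + gy) := by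
      nlinarith [mul_le_mul_of_nonneg_left hB hη.le, hkey, hc]
    exact le_of_mul_le_mul_left hmul hη
  rw [← hgy, ← hgyp, ← WithTop.coe_add, ← WithTop.coe_add, ← WithTop.coe_add, WithTop.coe_le_coe]
  exact hfinal
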